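/- Fix a sequence of poles ξ_1, ξ_2, … in the open unit disk and fix k, l ≥ 1. With z_r = e^{2πi(r−1)/N}, the averaged sample sum (1/N) Σ_{r=1}^N conj(z_r^{−(k−1)}) ψ_l(z_r) converges, as N → ∞, to the impulse-response coefficient a_{(k−1),l} of ψ_l. -/

import Mathlib

open Finset

/-- The Takenaka–Malmquist basis function ψ_{l+1} (0-indexed `l`), with poles
`ξ 0, ξ 1, …` (so `ξ j` is the paper's ξ_{j+1}). -/
noncomputable def TM (ξ : ℕ → ℂ) (l : ℕ) (z : ℂ) : ℂ :=
  ((Real.sqrt (1 - ‖ξ l‖ ^ 2) : ℂ) / (z - ξ l)) *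
    ∏ j ∈ Finset.range l, (1 - (starRingEnd ℂ) (ξ j) * z) / (z - ξ j)

/-- The sample point z_{r+1} = e^{2πi r/N} (0-indexed `r`). -/
noncomputable def zroot (N r : ℕ) : ℂ :=
  Complex.exp (2 * Real.pi * Complex.I * r / N)

lemma zroot_eq_pow (N r : ℕ) : zroot N r = zroot N 1 ^ r := by
  rw [zroot, zroot, ← Complex.exp_nat_mul]
  ring_nf

lemma zroot_ne_zero (N r : ℕ) : zroot N r ≠ 0 := Complex.exp_ne_zero _

lemma abs_zroot (N r : ℕ) : ‖zroot N r‖ = 1 := by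
  rw [zroot]
  have : 2 * (Real.pi:ℂ) * Complex.I * r / N = ((2 * Real.pi * r / N : ℝ) : ℂ) * Complex.I := by
    push_cast; ring
  rw [this, Complex.norm_exp_ofReal_mul_I]

lemma root_sum (N : ℕ) (hN : N ≠ 0) (m : ℤ) :
    (N:ℂ)⁻¹ * ∑ r ∈ range N, zroot N r ^ m = if (N:ℤ) ∣ m then 1 else 0 := by
  have hprim : IsPrimitiveRoot (zroot N 1) N := by
    have := Complex.isPrimitiveRoot_exp N hN
    simpa [zroot, mul_one] using this
  have hζ : (zroot N 1) ≠ 0 := zroot_ne_zero N 1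
  have hrw : ∀ r : ℕ, zroot N r ^ m = (zroot N 1 ^ m) ^ r := by
    intro r
    rw [zroot_eq_pow, ← zpow_natCast (zroot N 1) r, ← zpow_mul, mul_comm, zpow_mul,
      zpow_natCast]
  rw [Finset.sum_congr rfl (fun r _ => hrw r)]
  by_cases hdvd : (N:ℤ) ∣ m
  · rw [if_pos hdvd, (hprim.zpow_eq_one_iff_dvd m).mpr hdvd]
    simp only [one_pow, Finset.sum_const, Finset.card_range, nsmul_eq_mul, mul_one]
    exact inv_mul_cancel₀ (by exact_mod_cast hN)
  · rw [if_neg hdvd]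
    have hx : zroot N 1 ^ m ≠ 1 := fun h => hdvd ((hprim.zpow_eq_one_iff_dvd m).mp h)
    rw [geom_sum_eq hx]
    have hxN : (zroot N 1 ^ m) ^ N = 1 := by
      rw [← zpow_natCast (zroot N 1 ^ m) N, ← zpow_mul]
      exact (hprim.zpow_eq_one_iff_dvd _).mpr ⟨m, mul_comm m N⟩
    rw [hxN]
    simp

lemma conj_zroot_pow (N r : ℕ) (k : ℕ) :
    (starRingEnd ℂ) (zroot N r ^ (-(k : ℤ))) = zroot N r ^ (k : ℤ) := by
  have h1 : (starRingEnd ℂ) (zroot N r) = (zroot N r)⁻¹ := by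
    apply eq_inv_of_mul_eq_one_left
    rw [mul_comm, Complex.mul_conj]
    norm_cast
    rw [← Complex.sq_norm, abs_zroot]; norm_num
  rw [map_zpow₀, h1, inv_zpow, ← zpow_neg, neg_neg]

/-- With `a d l` the impulse-response (Laurent) coefficients of the TM
basis functions (hypothesis `ha`) and fixed k, l, the averaged sample sum
(1/N) Σ_{r=1}^N conj(z_r^{−k}) ψ_l(z_r) over the N-th roots of unity converges to the
impulse-response coefficient a_{k,l} (the paper's a_{(k−1),l}) as N → ∞. -/
theorem fir_tm_sample_sum_tendsto_coeff (ξ : ℕ → ℂ) (hξ : ∀ j, ‖ξ j‖ < 1)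
    (a : ℕ → ℕ → ℂ)
    (ha : ∀ l : ℕ, ∀ z : ℂ, (∀ j ≤ l, ‖ξ j‖ < ‖z‖) →
      HasSum (fun d : ℕ => a d l * z ^ (-(d : ℤ))) (TM ξ l z))
    (k l : ℕ) :
    Filter.Tendsto
      (fun N : ℕ => (N : ℂ)⁻¹ *
        ∑ r ∈ Finset.range N, (starRingEnd ℂ) (zroot N r ^ (-(k : ℤ))) * TM ξ l (zroot N r))
      Filter.atTop (nhds (a k l)) := by
  -- choose a radius ρ with max_{j ≤ l} |ξ j| < ρ < 1
  set M : ℝ := (Finset.range (l+1)).sup' (by simp) (fun j => ‖ξ j‖) with hMdef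
  have hM1 : M < 1 := by
    rw [Finset.sup'_lt_iff]
    intro j _; exact hξ j
  have hM0 : 0 ≤ M :=
    le_trans (norm_nonneg (ξ 0)) (Finset.le_sup' (fun j => ‖ξ j‖) (by simp : 0 ∈ Finset.range (l+1)))
  set ρ : ℝ := (M + 1)/2 with hρdef
  have hρ0 : 0 < ρ := by rw [hρdef]; linarith
  have hρ1 : ρ < 1 := by rw [hρdef]; linarith
  have hMρ : M < ρ := by rw [hρdef]; linarith
  have hξρ : ∀ j ≤ l, ‖ξ j‖ < ρ := fun j hj =>
    lt_of_le_of_lt (Finset.le_sup' (fun j => ‖ξ j‖) (Finset.mem_range.mpr (Nat.lt_succ_of_le hj))) hMρ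
  -- coefficient bound ‖a d l‖ ≤ C ρ^d
  have habsρ : ‖(ρ:ℂ)‖ = ρ := by rw [Complex.norm_real, Real.norm_eq_abs, abs_of_pos hρ0]
  have hsum := ha l (ρ:ℂ) (fun j hj => by rw [habsρ]; exact hξρ j hj)
  have hsumm : Summable (fun d => ‖a d l * (ρ:ℂ) ^ (-(d:ℤ))‖) :=
    summable_norm_iff.mpr hsum.summable
  set C : ℝ := ∑' d, ‖a d l * (ρ:ℂ) ^ (-(d:ℤ))‖ with hCdef
  have hC0 : 0 ≤ C := tsum_nonneg (fun d => norm_nonneg _)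
  have hbound : ∀ d : ℕ, ‖a d l‖ ≤ C * ρ ^ d := by
    intro d
    have h1 : ‖a d l * (ρ:ℂ) ^ (-(d:ℤ))‖ ≤ C :=
      Summable.le_tsum hsumm d (fun _ _ => norm_nonneg _)
    have h2 : ‖a d l * (ρ:ℂ) ^ (-(d:ℤ))‖ = ‖a d l‖ * ρ ^ (-(d:ℤ)) := by
      rw [norm_mul, norm_zpow, Complex.norm_real, Real.norm_of_nonneg hρ0.le]
    have h3 : (ρ:ℝ) ^ (-(d:ℤ)) * ρ ^ d = 1 := by
      rw [← zpow_natCast ρ d, ← zpow_add₀ (ne_of_gt hρ0)]; simp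
    calc ‖a d l‖ = ‖a d l‖ * ρ ^ (-(d:ℤ)) * ρ ^ d := by rw [mul_assoc, h3, mul_one]
    _ ≤ C * ρ ^ d := by
        apply mul_le_mul_of_nonneg_right _ (pow_nonneg hρ0.le d)
        rw [← h2]; exact h1
  -- reduce to norm bound
  rw [tendsto_iff_norm_sub_tendsto_zero]
  apply squeeze_zero' (Filter.Eventually.of_forall (fun N => norm_nonneg _))
    (g := fun N => (C * (1 - ρ)⁻¹) * ρ ^ N)
  · -- the key estimate, for N ≥ k + 1
    filter_upwards [Filter.eventually_ge_atTop (k+1)] with N hNk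
    have hN0 : N ≠ 0 := by omega
    have hNC : (N:ℂ) ≠ 0 := by exact_mod_cast hN0
    -- HasSum expression for the sample sum
    have hroot : ∀ r, HasSum
        (fun d => (starRingEnd ℂ) (zroot N r ^ (-(k:ℤ))) * (a d l * zroot N r ^ (-(d:ℤ))))
        ((starRingEnd ℂ) (zroot N r ^ (-(k:ℤ))) * TM ξ l (zroot N r)) :=
      fun r => (ha l _ (fun j _ => by rw [abs_zroot]; exact hξ j)).mul_left _
    have hsumN : HasSum
        (fun d => (N:ℂ)⁻¹ * ∑ r ∈ Finset.range N,
          (starRingEnd ℂ) (zroot N r ^ (-(k:ℤ))) * (a d l * zroot N r ^ (-(d:ℤ))))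
        ((N:ℂ)⁻¹ * ∑ r ∈ Finset.range N,
          (starRingEnd ℂ) (zroot N r ^ (-(k:ℤ))) * TM ξ l (zroot N r)) :=
      (hasSum_sum (fun r _ => hroot r)).mul_left _
    have hfun : (fun d : ℕ => (N:ℂ)⁻¹ * ∑ r ∈ Finset.range N,
          (starRingEnd ℂ) (zroot N r ^ (-(k:ℤ))) * (a d l * zroot N r ^ (-(d:ℤ))))
        = fun d : ℕ => if (N:ℤ) ∣ ((k:ℤ) - d) then a d l else 0 := by
      funext d
      have hterm : ∀ r ∈ Finset.range N,
          (starRingEnd ℂ) (zroot N r ^ (-(k:ℤ))) * (a d l * zroot N r ^ (-(d:ℤ)))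
          = a d l * zroot N r ^ ((k:ℤ) - d) := by
        intro r _
        rw [conj_zroot_pow, sub_eq_add_neg, zpow_add₀ (zroot_ne_zero N r)]
        ring
      rw [Finset.sum_congr rfl hterm, ← Finset.mul_sum,
        show (N:ℂ)⁻¹ * (a d l * ∑ r ∈ Finset.range N, zroot N r ^ ((k:ℤ) - d))
          = a d l * ((N:ℂ)⁻¹ * ∑ r ∈ Finset.range N, zroot N r ^ ((k:ℤ) - d)) by ring,
        root_sum N hN0, mul_ite, mul_one, mul_zero]
    rw [hfun] at hsumN
    -- subtract the k-th term
    have hδ : HasSum (fun d : ℕ => if d = k then a k l else 0) (a k l) :=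
      hasSum_ite_eq k (a k l)
    have hG := hsumN.sub hδ
    set G : ℕ → ℂ := fun d =>
      (if (N:ℤ) ∣ ((k:ℤ) - d) then a d l else 0) - (if d = k then a k l else 0) with hGdef
    -- supported on e j = k + (j+1) * N
    set e : ℕ → ℕ := fun j => k + (j+1) * N with hedef
    have hinj : Function.Injective e := by
      intro i j hij
      simp only [hedef] at hij
      have : (i+1) * N = (j+1) * N := by omega
      exact Nat.succ_injective (Nat.eq_of_mul_eq_mul_right (by omega) this)
    have hGsupp : ∀ d ∉ Set.range e, G d = 0 := by
      intro d hd
      simp only [hGdef]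
      by_cases hdk : d = k
      · subst hdk; simp
      · rw [if_neg hdk, sub_zero, if_neg]
        intro hdvd
        obtain ⟨t, ht⟩ := hdvd
        have hdt : (d:ℤ) = k + N * (-t) := by linarith
        have ht1 : 1 ≤ -t := by
          rcases lt_trichotomy (-t) 0 with h | h | h
          · exfalso
            have hmul : (N:ℤ) * (-t) ≤ (N:ℤ) * (-1) :=
              mul_le_mul_of_nonneg_left (by omega) (by positivity)
            have hd0 : (0:ℤ) ≤ d := Int.natCast_nonneg d
            have hk : (k:ℤ) < N := by exact_mod_cast hNk
            linarith
          · exfalso; apply hdk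
            rw [h, mul_zero, add_zero] at hdt
            exact_mod_cast hdt
          · omega
        apply hd
        refine ⟨(-t).toNat - 1, ?_⟩
        simp only [hedef]
        have htn : ((-t).toNat : ℤ) = -t := Int.toNat_of_nonneg (by omega)
        have : ((-t).toNat - 1 + 1) = (-t).toNat := by omega
        rw [this]
        have : ((k + (-t).toNat * N : ℕ) : ℤ) = (d:ℤ) := by
          push_cast [htn]
          linarith
        exact_mod_cast this
    have hGe : HasSum (G ∘ e) (_ - a k l) := (hinj.hasSum_iff hGsupp).mpr hG
    -- termwise bound
    have hle : ∀ j : ℕ, ‖(G ∘ e) j‖ ≤ (C * ρ ^ N) * ρ ^ j := by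
      intro j
      have hek : e j ≠ k := by simp [hedef]; omega
      have hedvd : (N:ℤ) ∣ ((k:ℤ) - e j) := by
        refine ⟨-(j+1), ?_⟩
        simp only [hedef]
        push_cast
        ring
      have : (G ∘ e) j = a (e j) l := by
        simp only [Function.comp_apply, hGdef, if_pos hedvd, if_neg hek, sub_zero]
      rw [this]
      calc ‖a (e j) l‖ ≤ C * ρ ^ (e j) := hbound _
      _ ≤ C * ρ ^ (N + j) := by
          apply mul_le_mul_of_nonneg_left _ hC0
          apply pow_le_pow_of_le_one hρ0.le hρ1.le
          simp only [hedef]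
          nlinarith
      _ = (C * ρ ^ N) * ρ ^ j := by rw [pow_add]; ring
    have hgsummable : Summable (fun j : ℕ => (C * ρ ^ N) * ρ ^ j) :=
      (summable_geometric_of_lt_one hρ0.le hρ1).mul_left _
    have hnorm : Summable (fun j => ‖(G ∘ e) j‖) :=
      Summable.of_nonneg_of_le (fun _ => norm_nonneg _) hle hgsummable
    calc ‖(N:ℂ)⁻¹ * ∑ r ∈ Finset.range N,
          (starRingEnd ℂ) (zroot N r ^ (-(k:ℤ))) * TM ξ l (zroot N r) - a k l‖
        = ‖∑' j, (G ∘ e) j‖ := by rw [hGe.tsum_eq]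
      _ ≤ ∑' j, ‖(G ∘ e) j‖ := norm_tsum_le_tsum_norm hnorm
      _ ≤ ∑' j : ℕ, (C * ρ ^ N) * ρ ^ j := Summable.tsum_le_tsum hle hnorm hgsummable
      _ = (C * ρ ^ N) * (1 - ρ)⁻¹ := by
          rw [tsum_mul_left, tsum_geometric_of_lt_one hρ0.le hρ1]
      _ = (C * (1 - ρ)⁻¹) * ρ ^ N := by ring
  · have := (tendsto_pow_atTop_nhds_zero_of_lt_one hρ0.le hρ1).const_mul (C * (1 - ρ)⁻¹)
    simpa using this
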